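/- For a monoid S the following are equivalent: (i) every right S-act is InD-injective; (ii) every indecomposable right S-act is InD-injective; (iii) every right S-act is PInD-injective; (iv) every indecomposable right S-act is PInD-injective; (v) every indecomposable right S-act is injective; (vi) every right S-act is injective (S is right absolutely injective). -/

import Mathlib

universe u

/-- A right `S`-act structure on a nonempty type `A`: a right action of the monoid `S`. -/
class RightAct (S : Type u) [Monoid S] (A : Type u) : Type u where
  act : A → S → A
  act_one : ∀ a : A, act a 1 = a
  act_mul : ∀ (a : A) (s t : S), act (act a s) t = act a (s * t)
  nonempty : Nonempty A

infixl:70 " ⊛ " => RightAct.act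

/-- `S` is left reversible: every two right ideals (equiv. principal ones) intersect. -/
def LeftReversible (S : Type u) [Monoid S] : Prop :=
  ∀ a b : S, ∃ u v : S, a * u = b * v

/-- A left zero element of the monoid `S`. -/
def IsLeftZero (S : Type u) [Monoid S] (z : S) : Prop :=
  ∀ s : S, z * s = z

/-- `f : A → B` is a homomorphism of right `S`-acts. -/
def IsActHom (S : Type u) [Monoid S] {A B : Type u} [RightAct S A] [RightAct S B]
    (f : A → B) : Prop :=
  ∀ (a : A) (s : S), f (a ⊛ s) = f a ⊛ s

/-- The restriction of `f : A → B` to the subset `C` is a homomorphism of right `S`-acts. -/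
def IsActHomOn (S : Type u) [Monoid S] {A B : Type u} [RightAct S A] [RightAct S B]
    (f : A → B) (C : Set A) : Prop :=
  ∀ a ∈ C, ∀ s : S, f (a ⊛ s) = f a ⊛ s

/-- A subact: a nonempty subset closed under the action. -/
def IsSubact (S : Type u) [Monoid S] {A : Type u} [RightAct S A] (C : Set A) : Prop :=
  C.Nonempty ∧ ∀ a ∈ C, ∀ s : S, a ⊛ s ∈ C

/-- A zero element of an act: fixed by the action of every `s ∈ S`. -/
def IsZeroElem (S : Type u) [Monoid S] {A : Type u} [RightAct S A] (θ : A) : Prop :=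
  ∀ s : S, θ ⊛ s = θ

/-- A subset `D` (viewed as an act) is decomposable: it is the disjoint union of two
nonempty subacts. -/
def DecomposableSet (S : Type u) [Monoid S] {A : Type u} [RightAct S A] (D : Set A) : Prop :=
  ∃ B C : Set A, IsSubact S B ∧ IsSubact S C ∧ B ∪ C = D ∧ B ∩ C = ∅

/-- A subset (viewed as an act) is indecomposable. -/
def IndecomposableSet (S : Type u) [Monoid S] {A : Type u} [RightAct S A] (D : Set A) : Prop :=
  ¬ DecomposableSet S D

/-- The act `A` is decomposable. -/
def Decomposable (S : Type u) [Monoid S] (A : Type u) [RightAct S A] : Prop :=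
  DecomposableSet S (Set.univ : Set A)

/-- The act `A` is indecomposable. -/
def Indecomposable (S : Type u) [Monoid S] (A : Type u) [RightAct S A] : Prop :=
  ¬ Decomposable S A

/-- A cyclic act: generated by a single element. -/
def CyclicAct (S : Type u) [Monoid S] (A : Type u) [RightAct S A] : Prop :=
  ∃ a : A, ∀ x : A, ∃ s : S, x = a ⊛ s

/-- `A` is a retract of `B`. -/
def IsRetractOf (S : Type u) [Monoid S] (A B : Type u) [RightAct S A] [RightAct S B] : Prop :=
  ∃ (i : A → B) (p : B → A), IsActHom S i ∧ IsActHom S p ∧ ∀ a : A, p (i a) = a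

/-- `Q` is an injective act: every homomorphism from a subact `C` of any act `B` into `Q`
extends to `B`. -/
def ActInjective (S : Type u) [Monoid S] (Q : Type u) [RightAct S Q] : Prop :=
  ∀ (B : Type u) [RightAct S B], ∀ C : Set B, IsSubact S C →
    ∀ f : B → Q, IsActHomOn S f C →
      ∃ g : B → Q, IsActHom S g ∧ Set.EqOn g f C

/-- `Q` is InC-injective: injective relative to all embeddings into indecomposable acts. -/
def InCInjective (S : Type u) [Monoid S] (Q : Type u) [RightAct S Q] : Prop :=
  ∀ (B : Type u) [RightAct S B], Indecomposable S B → ∀ C : Set B, IsSubact S C →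
    ∀ f : B → Q, IsActHomOn S f C →
      ∃ g : B → Q, IsActHom S g ∧ Set.EqOn g f C

/-- `Q` is InD-injective: injective relative to all embeddings of indecomposable acts. -/
def InDInjective (S : Type u) [Monoid S] (Q : Type u) [RightAct S Q] : Prop :=
  ∀ (B : Type u) [RightAct S B], ∀ C : Set B, IsSubact S C → IndecomposableSet S C →
    ∀ f : B → Q, IsActHomOn S f C →
      ∃ g : B → Q, IsActHom S g ∧ Set.EqOn g f C

/-- `Q` is PInD-injective: every monomorphism from an indecomposable subact extends. -/
def PInDInjective (S : Type u) [Monoid S] (Q : Type u) [RightAct S Q] : Prop :=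
  ∀ (B : Type u) [RightAct S B], ∀ C : Set B, IsSubact S C → IndecomposableSet S C →
    ∀ f : B → Q, IsActHomOn S f C → Set.InjOn f C →
      ∃ g : B → Q, IsActHom S g ∧ Set.EqOn g f C

/-- `A` is quasi injective: homomorphisms from subacts of `A` to `A` extend to `A`. -/
def QuasiInjective (S : Type u) [Monoid S] (A : Type u) [RightAct S A] : Prop :=
  ∀ C : Set A, IsSubact S C → ∀ f : A → A, IsActHomOn S f C →
    ∃ g : A → A, IsActHom S g ∧ Set.EqOn g f C

/-- `A` is pseudo injective: monomorphisms from subacts of any act into `A` extend. -/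
def PseudoInjective (S : Type u) [Monoid S] (A : Type u) [RightAct S A] : Prop :=
  ∀ (C : Type u) [RightAct S C], ∀ B : Set C, IsSubact S B →
    ∀ f : C → A, IsActHomOn S f B → Set.InjOn f B →
      ∃ g : C → A, IsActHom S g ∧ Set.EqOn g f B

/-- A subact `Q` of `A` (viewed as an act in its own right) is injective. -/
def ActInjectiveSet (S : Type u) [Monoid S] {A : Type u} [RightAct S A] (Q : Set A) : Prop :=
  ∀ (B : Type u) [RightAct S B], ∀ C : Set B, IsSubact S C →
    ∀ f : B → A, IsActHomOn S f C → (∀ c ∈ C, f c ∈ Q) →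
      ∃ g : B → A, IsActHom S g ∧ (∀ b : B, g b ∈ Q) ∧ Set.EqOn g f C

/-- A subact `Q` of `A` (viewed as an act in its own right) is InD-injective. -/
def InDInjectiveSet (S : Type u) [Monoid S] {A : Type u} [RightAct S A] (Q : Set A) : Prop :=
  ∀ (B : Type u) [RightAct S B], ∀ C : Set B, IsSubact S C → IndecomposableSet S C →
    ∀ f : B → A, IsActHomOn S f C → (∀ c ∈ C, f c ∈ Q) →
      ∃ g : B → A, IsActHom S g ∧ (∀ b : B, g b ∈ Q) ∧ Set.EqOn g f C

/-- A subact `Q` of `A` (viewed as an act in its own right) is PInD-injective. -/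
def PInDInjectiveSet (S : Type u) [Monoid S] {A : Type u} [RightAct S A] (Q : Set A) : Prop :=
  ∀ (B : Type u) [RightAct S B], ∀ C : Set B, IsSubact S C → IndecomposableSet S C →
    ∀ f : B → A, IsActHomOn S f C → Set.InjOn f C → (∀ c ∈ C, f c ∈ Q) →
      ∃ g : B → A, IsActHom S g ∧ (∀ b : B, g b ∈ Q) ∧ Set.EqOn g f C

/-- The monoid `S` as a right act over itself, by multiplication. -/
instance selfAct (S : Type u) [Monoid S] : RightAct S S where
  act a s := a * s
  act_one := mul_one
  act_mul a s t := mul_assoc a s t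
  nonempty := ⟨1⟩

/-- `Q` is weakly injective: homomorphisms from right ideals of `S` into `Q` extend to `S`. -/
def WeaklyInjective (S : Type u) [Monoid S] (Q : Type u) [RightAct S Q] : Prop :=
  ∀ I : Set S, IsSubact S I → ∀ f : S → Q, IsActHomOn S f I →
    ∃ g : S → Q, IsActHom S g ∧ Set.EqOn g f I

/-- The relation whose equivalence closure has the indecomposable components as classes. -/
def ActRel (S : Type u) [Monoid S] {A : Type u} [RightAct S A] (a b : A) : Prop :=
  ∃ s : S, b = a ⊛ s

/-- The indecomposable component of the element `a` of an act. -/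
def ActComponent (S : Type u) [Monoid S] {A : Type u} [RightAct S A] (a : A) : Set A :=
  {b | Relation.EqvGen (ActRel S) a b}

namespace AbsInjAux

local infixl:70 " ⊚ " => RightAct.act

variable {S : Type u} [Monoid S]

section Basic
variable {A : Type u} [RightAct S A]

lemma act_one1 (a : A) : a ⊚ (1 : S) = a := RightAct.act_one a

lemma act_mul1 (a : A) (s t : S) : a ⊚ s ⊚ t = a ⊚ (s * t) := RightAct.act_mul a s t

end Basic

/-- Sum of two acts. -/
instance sumAct {A B : Type u} [RightAct S A] [RightAct S B] : RightAct S (A ⊕ B) where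
  act x s := match x with
    | .inl a => .inl (a ⊛ s)
    | .inr b => .inr (b ⊛ s)
  act_one x := by cases x <;> simp [RightAct.act_one]
  act_mul x s t := by cases x <;> simp [RightAct.act_mul]
  nonempty := ⟨.inl (Classical.choice (RightAct.nonempty S))⟩

lemma sum_act_inl {A B : Type u} [RightAct S A] [RightAct S B] (a : A) (s : S) :
    (Sum.inl a : A ⊕ B) ⊚ s = Sum.inl (a ⊚ s) := rfl

lemma sum_act_inr {A B : Type u} [RightAct S A] [RightAct S B] (b : B) (s : S) :
    (Sum.inr b : A ⊕ B) ⊚ s = Sum.inr (b ⊚ s) := rfl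

/-- Adjoining a new zero to an act. -/
instance optAct {A : Type u} [RightAct S A] : RightAct S (Option A) where
  act x s := x.map (· ⊛ s)
  act_one x := by cases x <;> simp [RightAct.act_one]
  act_mul x s t := by cases x <;> simp [RightAct.act_mul]
  nonempty := ⟨none⟩

lemma opt_act_some {A : Type u} [RightAct S A] (a : A) (s : S) :
    (some a : Option A) ⊚ s = some (a ⊚ s) := rfl

lemma opt_act_none {A : Type u} [RightAct S A] (s : S) :
    (none : Option A) ⊚ s = none := rfl

/-- The act structure on a subact. -/
def subAct {A : Type u} [RightAct S A] {K : Set A} (hK : IsSubact S K) : RightAct S K where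
  act a s := ⟨a.1 ⊛ s, hK.2 a.1 a.2 s⟩
  act_one a := Subtype.ext (RightAct.act_one a.1)
  act_mul a s t := Subtype.ext (RightAct.act_mul a.1 s t)
  nonempty := ⟨⟨hK.1.choose, hK.1.choose_spec⟩⟩

end AbsInjAux
namespace AbsInjAux2
open AbsInjAux

local infixl:70 " ⊚ " => RightAct.act

variable {S : Type u} [Monoid S]

/-- Existence of a left zero, given that every act is InD-injective. -/
lemma exists_left_zero
    (h1 : ∀ (A : Type u) [RightAct S A], InDInjective S A) :
    ∃ z : S, IsLeftZero S z := by
  classical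
  set C : Set (Option S) := Set.range Option.some with hCdef
  have hCsub : IsSubact S C := by
    constructor
    · exact ⟨some 1, ⟨1, rfl⟩⟩
    · rintro a ⟨x, rfl⟩ s
      exact ⟨x ⊛ s, rfl⟩
  have hCind : IndecomposableSet S C := by
    rintro ⟨P, Q, hP, hQ, hU, hI⟩
    have key : ∀ P Q : Set (Option S), IsSubact S P → IsSubact S Q →
        P ∪ Q = C → P ∩ Q = ∅ → some (1 : S) ∈ P → False := by
      intro P Q hP hQ hU hI h1P
      obtain ⟨q, hq⟩ := hQ.1
      have hqC : q ∈ C := hU ▸ Set.mem_union_right P hq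
      obtain ⟨x, rfl⟩ := hqC
      have : some x ∈ P := by
        have := hP.2 _ h1P x
        rwa [opt_act_some, show (1:S) ⊚ x = x from one_mul x] at this
      have : some x ∈ P ∩ Q := ⟨this, hq⟩
      rw [hI] at this
      exact this
    have h1C : some (1 : S) ∈ C := ⟨1, rfl⟩
    rw [← hU] at h1C
    rcases h1C with h | h
    · exact key P Q hP hQ hU hI h
    · exact key Q P hQ hP (by rw [Set.union_comm]; exact hU)
        (by rw [Set.inter_comm]; exact hI) h
  have hf : IsActHomOn S (fun o : Option S => o.getD 1) C := by
    rintro a ⟨x, rfl⟩ s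
    rfl
  obtain ⟨g, hg, hgC⟩ := h1 S (Option S) C hCsub hCind _ hf
  refine ⟨g none, fun s => ?_⟩
  have h1 : g (none ⊛ s) = g none ⊚ s := hg none s
  rw [opt_act_none] at h1
  exact h1.symm

section Conn
variable {A : Type u} [RightAct S A]

/-- The one-step relation inside a subset. -/
def relIn (S : Type u) [Monoid S] {A : Type u} [RightAct S A] (C : Set A) (x y : A) : Prop :=
  x ∈ C ∧ y ∈ C ∧ ∃ s : S, y = x ⊛ s

/-- Indecomposable subacts are connected. -/
lemma indec_connected {C : Set A} (hC : IsSubact S C) (hind : IndecomposableSet S C)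
    {x : A} (hx : x ∈ C) {y : A} (hy : y ∈ C) :
    Relation.EqvGen (relIn S C) x y := by
  classical
  set P : Set A := {y | y ∈ C ∧ Relation.EqvGen (relIn S C) x y} with hPdef
  set Q : Set A := C \ P with hQdef
  have hPsub : IsSubact S P := by
    refine ⟨⟨x, hx, Relation.EqvGen.refl x⟩, ?_⟩
    rintro a ⟨haC, hagen⟩ s
    refine ⟨hC.2 a haC s, hagen.trans _ _ _ (Relation.EqvGen.rel _ _ ⟨haC, hC.2 a haC s, s, rfl⟩)⟩
  have hQP : ∀ a ∈ Q, False ∨ True := fun _ _ => Or.inr trivial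
  by_cases hQne : Q.Nonempty
  · exfalso
    apply hind
    refine ⟨P, Q, hPsub, ⟨hQne, ?_⟩, ?_, ?_⟩
    · rintro a ⟨haC, haP⟩ s
      refine ⟨hC.2 a haC s, fun hmem => haP ?_⟩
      rcases hmem with ⟨-, hgen⟩
      exact ⟨haC, hgen.trans _ _ _ (Relation.EqvGen.symm _ _
        (Relation.EqvGen.rel _ _ ⟨haC, hC.2 a haC s, s, rfl⟩))⟩
    · apply Set.Subset.antisymm
      · rintro a (⟨haC, -⟩ | ⟨haC, -⟩) <;> exact haC
      · intro a haC
        by_cases h : a ∈ P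
        · exact Or.inl h
        · exact Or.inr ⟨haC, h⟩
    · ext a
      simp only [Set.mem_inter_iff, Set.mem_empty_iff_false, iff_false]
      rintro ⟨haP, -, hnP⟩
      exact hnP haP
  · have : y ∉ Q := fun h => hQne ⟨y, h⟩
    rw [hQdef] at this
    simp only [Set.mem_diff, not_and, not_not] at this
    exact (this hy).2

/-- Homomorphisms map connected elements to connected elements. -/
lemma hom_respects_conn {B : Type u} [RightAct S B] {C : Set A} {f : A → B}
    (hf : IsActHomOn S f C) {x y : A} (h : Relation.EqvGen (relIn S C) x y) :
    Relation.EqvGen (ActRel S) (f x) (f y) := by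
  induction h with
  | rel u v huv =>
      obtain ⟨hu, hv, s, rfl⟩ := huv
      exact Relation.EqvGen.rel _ _ ⟨s, hf u hu s⟩
  | refl u => exact Relation.EqvGen.refl _
  | symm u v _ ih => exact ih.symm _ _
  | trans u v w _ _ ih1 ih2 => exact ih1.trans _ _ _ ih2

/-- Components are subacts. -/
lemma component_subact (a : A) : IsSubact S (ActComponent S a) := by
  refine ⟨⟨a, Relation.EqvGen.refl a⟩, ?_⟩
  intro b hb s
  exact Relation.EqvGen.trans _ _ _ hb (Relation.EqvGen.rel _ _ ⟨s, rfl⟩)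

lemma component_closed {a b c : A} (hb : b ∈ ActComponent S a)
    (h : Relation.EqvGen (ActRel S) b c) : c ∈ ActComponent S a :=
  Relation.EqvGen.trans _ _ _ hb h

/-- Components are indecomposable subsets. -/
lemma component_indec (a : A) : IndecomposableSet S (ActComponent S a) := by
  rintro ⟨P, Q, hP, hQ, hU, hI⟩
  have hdisj : ∀ x, x ∈ P → x ∈ Q → False := by
    intro x h1 h2
    have : x ∈ P ∩ Q := ⟨h1, h2⟩
    rw [hI] at this
    exact this
  have key : ∀ x y : A, Relation.EqvGen (ActRel S) x y → x ∈ ActComponent S a →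
      (x ∈ P ↔ y ∈ P) := by
    intro x y h
    induction h with
    | rel u v huv =>
        intro huK
        obtain ⟨s, rfl⟩ := huv
        have hvK : u ⊛ s ∈ ActComponent S a := component_closed huK
          (Relation.EqvGen.rel _ _ ⟨s, rfl⟩)
        constructor
        · intro hup; exact hP.2 u hup s
        · intro hvp
          have huPQ : u ∈ P ∪ Q := hU ▸ huK
          rcases huPQ with h | h
          · exact h
          · exact absurd hvp (fun hvp => hdisj _ hvp (hQ.2 u h s))
      | refl u => intro _; rfl
      | symm u v h ih =>
          intro hvK
          have huK : u ∈ ActComponent S a := component_closed hvK (Relation.EqvGen.symm _ _ h)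
          exact (ih huK).symm
      | trans u v w h1 h2 ih1 ih2 =>
          intro huK
          have hvK : v ∈ ActComponent S a := component_closed huK h1
          exact (ih1 huK).trans (ih2 hvK)
  obtain ⟨p, hp⟩ := hP.1
  obtain ⟨q, hq⟩ := hQ.1
  have hpK : p ∈ ActComponent S a := hU ▸ Set.mem_union_left Q hp
  have hqK : q ∈ ActComponent S a := hU ▸ Set.mem_union_right P hq
  have haK : a ∈ ActComponent S a := Relation.EqvGen.refl a
  have haPQ : a ∈ P ∪ Q := hU ▸ haK
  rcases haPQ with h | h
  · exact hdisj q ((key a q hqK haK).mp h) hq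
  · exact hdisj a ((key a p hpK haK).mpr hp) h
end Conn

end AbsInjAux2
set_option linter.unusedSectionVars false
namespace AbsInjAux3
open AbsInjAux AbsInjAux2

local infixl:70 " ⊚ " => RightAct.act

variable {S : Type u} [Monoid S]

open Classical in
/-- Normal form for gluing two copies of `S` along `(z₁,1) ~ (z₂,0)`. -/
noncomputable def nu2 (z₁ z₂ : S) (x : S ⊕ S) : S ⊕ S :=
  if x = Sum.inr z₁ then Sum.inl z₂ else x

open Classical in
/-- Normal form for gluing three copies of `S`:
`(z₁,1) ~ (z₂,0)`, `(z₁,2) ~ (z₁,0)`, `(z₂,2) ~ (z₂,1)`. -/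
noncomputable def nu3 (z₁ z₂ : S) (x : S ⊕ (S ⊕ S)) : S ⊕ (S ⊕ S) :=
  if x = Sum.inr (Sum.inl z₁) then Sum.inl z₂
  else if x = Sum.inr (Sum.inr z₁) then Sum.inl z₁
  else if x = Sum.inr (Sum.inr z₂) then Sum.inr (Sum.inl z₂)
  else x

variable {z₁ z₂ : S}

lemma nu2_inl (a : S) : nu2 z₁ z₂ (Sum.inl a) = Sum.inl a := by simp [nu2]

lemma nu2_inr_z₁ : nu2 z₁ z₂ (Sum.inr z₁) = Sum.inl z₂ := by simp [nu2]

lemma nu2_inr_ne {a : S} (h : a ≠ z₁) : nu2 z₁ z₂ (Sum.inr a) = Sum.inr a := by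
  simp [nu2, h]

lemma nu2_idem (x : S ⊕ S) : nu2 z₁ z₂ (nu2 z₁ z₂ x) = nu2 z₁ z₂ x := by
  rcases x with a | a
  · rw [nu2_inl, nu2_inl]
  · by_cases h : a = z₁
    · subst h; rw [nu2_inr_z₁, nu2_inl]
    · rw [nu2_inr_ne h, nu2_inr_ne h]

lemma nu3_inl (a : S) : nu3 z₁ z₂ (Sum.inl a) = Sum.inl a := by simp [nu3]

lemma nu3_i1_z₁ : nu3 z₁ z₂ (Sum.inr (Sum.inl z₁)) = Sum.inl z₂ := by simp [nu3]

lemma nu3_i1_ne {a : S} (h : a ≠ z₁) :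
    nu3 z₁ z₂ (Sum.inr (Sum.inl a)) = Sum.inr (Sum.inl a) := by simp [nu3, h]

lemma nu3_i2_z₁ : nu3 z₁ z₂ (Sum.inr (Sum.inr z₁)) = Sum.inl z₁ := by simp [nu3]

lemma nu3_i2_z₂ (ne : z₁ ≠ z₂) :
    nu3 z₁ z₂ (Sum.inr (Sum.inr z₂)) = Sum.inr (Sum.inl z₂) := by
  simp [nu3, Ne.symm ne]

lemma nu3_i2_ne {a : S} (h1 : a ≠ z₁) (h2 : a ≠ z₂) :
    nu3 z₁ z₂ (Sum.inr (Sum.inr a)) = Sum.inr (Sum.inr a) := by simp [nu3, h1, h2]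

lemma nu3_idem (ne : z₁ ≠ z₂) (x : S ⊕ (S ⊕ S)) :
    nu3 z₁ z₂ (nu3 z₁ z₂ x) = nu3 z₁ z₂ x := by
  rcases x with a | a | a
  · rw [nu3_inl, nu3_inl]
  · by_cases h : a = z₁
    · subst h; rw [nu3_i1_z₁, nu3_inl]
    · rw [nu3_i1_ne h, nu3_i1_ne h]
  · by_cases h : a = z₁
    · subst h; rw [nu3_i2_z₁, nu3_inl]
    · by_cases h2 : a = z₂
      · subst h2; rw [nu3_i2_z₂ ne, nu3_i1_ne (Ne.symm ne)]
      · rw [nu3_i2_ne h h2, nu3_i2_ne h h2]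

lemma sum_self_inl (a s : S) : (Sum.inl a : S ⊕ S) ⊚ s = Sum.inl (a * s) := rfl
lemma sum_self_inr (a s : S) : (Sum.inr a : S ⊕ S) ⊚ s = Sum.inr (a * s) := rfl
lemma sum3_inl (a s : S) : (Sum.inl a : S ⊕ (S ⊕ S)) ⊚ s = Sum.inl (a * s) := rfl
lemma sum3_i1 (a s : S) :
    (Sum.inr (Sum.inl a) : S ⊕ (S ⊕ S)) ⊚ s = Sum.inr (Sum.inl (a * s)) := rfl
lemma sum3_i2 (a s : S) :
    (Sum.inr (Sum.inr a) : S ⊕ (S ⊕ S)) ⊚ s = Sum.inr (Sum.inr (a * s)) := rfl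

lemma nu2_act (hz₁ : IsLeftZero S z₁) (hz₂ : IsLeftZero S z₂) (x : S ⊕ S) (s : S) :
    nu2 z₁ z₂ (nu2 z₁ z₂ x ⊚ s) = nu2 z₁ z₂ (x ⊚ s) := by
  rcases x with a | a
  · rw [nu2_inl]
  · by_cases h : a = z₁
    · subst h
      rw [nu2_inr_z₁, sum_self_inl, sum_self_inr, hz₂, hz₁, nu2_inl, nu2_inr_z₁]
    · rw [nu2_inr_ne h]

lemma nu3_act (hz₁ : IsLeftZero S z₁) (hz₂ : IsLeftZero S z₂) (ne : z₁ ≠ z₂)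
    (x : S ⊕ (S ⊕ S)) (s : S) :
    nu3 z₁ z₂ (nu3 z₁ z₂ x ⊚ s) = nu3 z₁ z₂ (x ⊚ s) := by
  rcases x with a | a | a
  · rw [nu3_inl]
  · by_cases h : a = z₁
    · subst h
      rw [nu3_i1_z₁, sum3_inl, sum3_i1, hz₂, hz₁, nu3_inl, nu3_i1_z₁]
    · rw [nu3_i1_ne h]
  · by_cases h : a = z₁
    · subst h
      rw [nu3_i2_z₁, sum3_inl, sum3_i2, hz₁, nu3_inl, nu3_i2_z₁]
    · by_cases h2 : a = z₂
      · subst h2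
        rw [nu3_i2_z₂ ne, sum3_i1, sum3_i2, hz₂, nu3_i1_ne (Ne.symm ne), nu3_i2_z₂ ne]
      · rw [nu3_i2_ne h h2]

/-- The glued two-copy act (as a type of normal forms). -/
abbrev NF2 (z₁ z₂ : S) : Type u := {x : S ⊕ S // nu2 z₁ z₂ x = x}

/-- The glued three-copy act (as a type of normal forms). -/
abbrev NF3 (z₁ z₂ : S) : Type u := {x : S ⊕ (S ⊕ S) // nu3 z₁ z₂ x = x}

noncomputable def nf2Act (hz₁ : IsLeftZero S z₁) (hz₂ : IsLeftZero S z₂) :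
    RightAct S (NF2 z₁ z₂) where
  act x s := ⟨nu2 z₁ z₂ (x.1 ⊚ s), nu2_idem _⟩
  act_one x := Subtype.ext (by
    show nu2 z₁ z₂ (x.1 ⊚ 1) = x.1
    rw [act_one1, x.2])
  act_mul x s t := Subtype.ext (by
    show nu2 z₁ z₂ (nu2 z₁ z₂ (x.1 ⊚ s) ⊚ t) = nu2 z₁ z₂ (x.1 ⊚ (s * t))
    rw [nu2_act hz₁ hz₂, act_mul1])
  nonempty := ⟨⟨Sum.inl z₁, nu2_inl z₁⟩⟩

noncomputable def nf3Act (hz₁ : IsLeftZero S z₁) (hz₂ : IsLeftZero S z₂) (ne : z₁ ≠ z₂) :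
    RightAct S (NF3 z₁ z₂) where
  act x s := ⟨nu3 z₁ z₂ (x.1 ⊚ s), nu3_idem ne _⟩
  act_one x := Subtype.ext (by
    show nu3 z₁ z₂ (x.1 ⊚ 1) = x.1
    rw [act_one1, x.2])
  act_mul x s t := Subtype.ext (by
    show nu3 z₁ z₂ (nu3 z₁ z₂ (x.1 ⊚ s) ⊚ t) = nu3 z₁ z₂ (x.1 ⊚ (s * t))
    rw [nu3_act hz₁ hz₂ ne, act_mul1])
  nonempty := ⟨⟨Sum.inl z₁, nu3_inl z₁⟩⟩

/-- The subset of `NF3` coming from the first two copies. -/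
def C3 (z₁ z₂ : S) : Set (NF3 z₁ z₂) :=
  {x | (∃ a, x.1 = Sum.inl a) ∨ (∃ a, x.1 = Sum.inr (Sum.inl a))}

/-- The comparison map from the three-copy glued act to the two-copy glued act. -/
noncomputable def f3 (z₁ z₂ : S) (x : NF3 z₁ z₂) : NF2 z₁ z₂ :=
  match x with
  | ⟨Sum.inl a, _⟩ => ⟨Sum.inl a, nu2_inl a⟩
  | ⟨Sum.inr (Sum.inl a), _⟩ => ⟨nu2 z₁ z₂ (Sum.inr a), nu2_idem _⟩
  | ⟨Sum.inr (Sum.inr _), _⟩ => ⟨Sum.inl z₁, nu2_inl z₁⟩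

end AbsInjAux3
namespace AbsInjAux4
open AbsInjAux AbsInjAux2 AbsInjAux3

local infixl:70 " ⊚ " => RightAct.act

variable {S : Type u} [Monoid S]

lemma prop_ne_z₁ {z₁ z₂ a : S} (hvp : nu3 z₁ z₂ (Sum.inr (Sum.inl a)) = Sum.inr (Sum.inl a)) :
    a ≠ z₁ := by
  intro h
  subst h
  rw [nu3_i1_z₁] at hvp
  cases hvp

lemma nf2_prop_ne_z₁ {z₁ z₂ a : S} (hvp : nu2 z₁ z₂ (Sum.inr a) = Sum.inr a) :
    a ≠ z₁ := by
  intro h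
  subst h
  rw [nu2_inr_z₁] at hvp
  cases hvp

lemma unique_left_zero (h1 : ∀ (A : Type u) [RightAct S A], InDInjective S A)
    {z₁ z₂ : S} (hz₁ : IsLeftZero S z₁) (hz₂ : IsLeftZero S z₂) : z₁ = z₂ := by
  by_contra ne
  have h1z₁ : (1 : S) ≠ z₁ := by
    intro h
    apply ne
    have : z₂ = z₁ := by rw [← one_mul z₂, h, hz₁ z₂]
    exact this.symm
  have h1z₂ : (1 : S) ≠ z₂ := by
    intro h
    apply ne
    rw [← one_mul z₁, h, hz₂ z₁]
  letI iN2 : RightAct S (NF2 z₁ z₂) := nf2Act hz₁ hz₂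
  letI iN3 : RightAct S (NF3 z₁ z₂) := nf3Act hz₁ hz₂ ne
  -- distinguished elements
  set e0 : NF3 z₁ z₂ := ⟨Sum.inl 1, nu3_inl 1⟩ with he0
  set e1 : NF3 z₁ z₂ := ⟨Sum.inr (Sum.inl 1), nu3_i1_ne h1z₁⟩ with he1
  set d : NF3 z₁ z₂ := ⟨Sum.inr (Sum.inr 1), nu3_i2_ne h1z₁ h1z₂⟩ with hd
  set xel : NF3 z₁ z₂ := ⟨Sum.inl z₁, nu3_inl z₁⟩ with hxel
  set wel : NF3 z₁ z₂ := ⟨Sum.inl z₂, nu3_inl z₂⟩ with hwel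
  set yel : NF3 z₁ z₂ := ⟨Sum.inr (Sum.inl z₂), nu3_i1_ne (Ne.symm ne)⟩ with hyel
  -- C3 is a subact
  have hsub : IsSubact S (C3 z₁ z₂) := by
    constructor
    · exact ⟨e0, Or.inl ⟨1, rfl⟩⟩
    · rintro ⟨v, hvp⟩ hx s
      rcases hx with ⟨a, ha⟩ | ⟨a, ha⟩ <;> simp only at ha <;> subst ha
      · left
        refine ⟨a * s, ?_⟩
        show nu3 z₁ z₂ (Sum.inl (a * s)) = _
        rw [nu3_inl]
      · by_cases has : a * s = z₁
        · left
          refine ⟨z₂, ?_⟩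
          show nu3 z₁ z₂ (Sum.inr (Sum.inl (a * s))) = _
          rw [has, nu3_i1_z₁]
        · right
          refine ⟨a * s, ?_⟩
          show nu3 z₁ z₂ (Sum.inr (Sum.inl (a * s))) = _
          rw [nu3_i1_ne has]
  -- C3 is indecomposable
  have hind : IndecomposableSet S (C3 z₁ z₂) := by
    rintro ⟨P, Q, hP, hQ, hU, hI⟩
    have key : ∀ P Q : Set (NF3 z₁ z₂), IsSubact S P → IsSubact S Q →
        P ∪ Q = C3 z₁ z₂ → P ∩ Q = ∅ → e0 ∈ P → False := by
      intro P Q hP hQ hU hI he0P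
      have hdisj : ∀ x, x ∈ P → x ∈ Q → False := by
        intro x hxP hxQ
        have : x ∈ P ∩ Q := ⟨hxP, hxQ⟩
        rw [hI] at this
        exact this
      have hcopy0 : ∀ a : S, (⟨Sum.inl a, nu3_inl a⟩ : NF3 z₁ z₂) ∈ P := by
        intro a
        have hmem := hP.2 e0 he0P a
        have : e0 ⊚ a = (⟨Sum.inl a, nu3_inl a⟩ : NF3 z₁ z₂) := by
          apply Subtype.ext
          show nu3 z₁ z₂ (Sum.inl (1 * a)) = Sum.inl a
          rw [one_mul, nu3_inl]
        rwa [this] at hmem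
      have hwP : wel ∈ P := hcopy0 z₂
      have he1P : e1 ∈ P := by
        have he1C : e1 ∈ C3 z₁ z₂ := Or.inr ⟨1, rfl⟩
        rw [← hU] at he1C
        rcases he1C with h | h
        · exact h
        · exfalso
          have hmem := hQ.2 e1 h z₁
          have : e1 ⊚ z₁ = wel := by
            apply Subtype.ext
            show nu3 z₁ z₂ (Sum.inr (Sum.inl (1 * z₁))) = Sum.inl z₂
            rw [one_mul, nu3_i1_z₁]
          rw [this] at hmem
          exact hdisj wel hwP hmem
      have hCP : ∀ x ∈ C3 z₁ z₂, x ∈ P := by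
        rintro ⟨v, hvp⟩ hx
        rcases hx with ⟨a, ha⟩ | ⟨a, ha⟩ <;> simp only at ha <;> subst ha
        · exact hcopy0 a
        · have hane : a ≠ z₁ := prop_ne_z₁ hvp
          have hmem := hP.2 e1 he1P a
          have : e1 ⊚ a = (⟨Sum.inr (Sum.inl a), hvp⟩ : NF3 z₁ z₂) := by
            apply Subtype.ext
            show nu3 z₁ z₂ (Sum.inr (Sum.inl (1 * a))) = Sum.inr (Sum.inl a)
            rw [one_mul, nu3_i1_ne hane]
          rwa [this] at hmem
      obtain ⟨q, hq⟩ := hQ.1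
      have hqC : q ∈ C3 z₁ z₂ := hU ▸ Set.mem_union_right P hq
      exact hdisj q (hCP q hqC) hq
    have he0C : e0 ∈ C3 z₁ z₂ := Or.inl ⟨1, rfl⟩
    rw [← hU] at he0C
    rcases he0C with h | h
    · exact key P Q hP hQ hU hI h
    · exact key Q P hQ hP (by rw [Set.union_comm]; exact hU)
        (by rw [Set.inter_comm]; exact hI) h
  -- f3 is a homomorphism on C3
  have hhom : IsActHomOn S (f3 z₁ z₂) (C3 z₁ z₂) := by
    rintro ⟨v, hvp⟩ hx s
    rcases hx with ⟨a, ha⟩ | ⟨a, ha⟩ <;> simp only at ha <;> subst ha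
    · have hxs : (⟨Sum.inl a, hvp⟩ : NF3 z₁ z₂) ⊚ s =
          (⟨Sum.inl (a * s), nu3_inl _⟩ : NF3 z₁ z₂) := by
        apply Subtype.ext
        show nu3 z₁ z₂ (Sum.inl (a * s)) = Sum.inl (a * s)
        rw [nu3_inl]
      rw [hxs]
      apply Subtype.ext
      show Sum.inl (a * s) = nu2 z₁ z₂ (Sum.inl (a * s))
      rw [nu2_inl]
    · have hane : a ≠ z₁ := prop_ne_z₁ hvp
      have hfx : f3 z₁ z₂ (⟨Sum.inr (Sum.inl a), hvp⟩ : NF3 z₁ z₂) =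
          (⟨Sum.inr a, nu2_inr_ne hane⟩ : NF2 z₁ z₂) := by
        apply Subtype.ext
        show nu2 z₁ z₂ (Sum.inr a) = Sum.inr a
        rw [nu2_inr_ne hane]
      rw [hfx]
      by_cases has : a * s = z₁
      · have hxs : (⟨Sum.inr (Sum.inl a), hvp⟩ : NF3 z₁ z₂) ⊚ s =
            (⟨Sum.inl z₂, nu3_inl _⟩ : NF3 z₁ z₂) := by
          apply Subtype.ext
          show nu3 z₁ z₂ (Sum.inr (Sum.inl (a * s))) = Sum.inl z₂
          rw [has, nu3_i1_z₁]
        rw [hxs]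
        apply Subtype.ext
        show Sum.inl z₂ = nu2 z₁ z₂ (Sum.inr (a * s))
        rw [has, nu2_inr_z₁]
      · have hxs : (⟨Sum.inr (Sum.inl a), hvp⟩ : NF3 z₁ z₂) ⊚ s =
            (⟨Sum.inr (Sum.inl (a * s)), nu3_i1_ne has⟩ : NF3 z₁ z₂) := by
          apply Subtype.ext
          show nu3 z₁ z₂ (Sum.inr (Sum.inl (a * s))) = Sum.inr (Sum.inl (a * s))
          rw [nu3_i1_ne has]
        rw [hxs]
        apply Subtype.ext
        show nu2 z₁ z₂ (Sum.inr (a * s)) = nu2 z₁ z₂ (Sum.inr (a * s))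
        rfl
  obtain ⟨g, hg, hgC⟩ := h1 (NF2 z₁ z₂) (NF3 z₁ z₂) (C3 z₁ z₂) hsub hind (f3 z₁ z₂) hhom
  -- the contradiction
  have hd1 : d ⊚ z₁ = xel := by
    apply Subtype.ext
    show nu3 z₁ z₂ (Sum.inr (Sum.inr (1 * z₁))) = Sum.inl z₁
    rw [one_mul, nu3_i2_z₁]
  have hd2 : d ⊚ z₂ = yel := by
    apply Subtype.ext
    show nu3 z₁ z₂ (Sum.inr (Sum.inr (1 * z₂))) = Sum.inr (Sum.inl z₂)
    rw [one_mul, nu3_i2_z₂ ne]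
  have hxC : xel ∈ C3 z₁ z₂ := Or.inl ⟨z₁, rfl⟩
  have hyC : yel ∈ C3 z₁ z₂ := Or.inr ⟨z₂, rfl⟩
  have hgx : g xel = (⟨Sum.inl z₁, nu2_inl z₁⟩ : NF2 z₁ z₂) := by
    rw [hgC hxC]
    rfl
  have hgy : g yel = (⟨Sum.inr z₂, nu2_inr_ne (Ne.symm ne)⟩ : NF2 z₁ z₂) := by
    rw [hgC hyC]
    apply Subtype.ext
    show nu2 z₁ z₂ (Sum.inr z₂) = Sum.inr z₂
    rw [nu2_inr_ne (Ne.symm ne)]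
  have hα1 : g d ⊚ z₁ = (⟨Sum.inl z₁, nu2_inl z₁⟩ : NF2 z₁ z₂) := by
    rw [← hg d z₁, hd1, hgx]
  have hα2 : g d ⊚ z₂ = (⟨Sum.inr z₂, nu2_inr_ne (Ne.symm ne)⟩ : NF2 z₁ z₂) := by
    rw [← hg d z₂, hd2, hgy]
  rcases hv : (g d).1 with a | a
  · have h2' : nu2 z₁ z₂ ((g d).1 ⊚ z₂) = Sum.inr z₂ := congrArg Subtype.val hα2
    rw [hv, sum_self_inl, nu2_inl] at h2'
    cases h2'
  · have hprop := (g d).2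
    rw [hv] at hprop
    have hane : a ≠ z₁ := nf2_prop_ne_z₁ hprop
    have h1' : nu2 z₁ z₂ ((g d).1 ⊚ z₁) = Sum.inl z₁ := congrArg Subtype.val hα1
    rw [hv, sum_self_inr] at h1'
    by_cases haz : a * z₁ = z₁
    · rw [haz, nu2_inr_z₁] at h1'
      injection h1' with h
      exact ne h.symm
    · rw [nu2_inr_ne haz] at h1'
      cases h1'

end AbsInjAux4
namespace AbsInjAux5
open AbsInjAux AbsInjAux2 AbsInjAux3 AbsInjAux4

local infixl:70 " ⊚ " => RightAct.act

variable {S : Type u} [Monoid S]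

lemma left_reversible_of_inD (h1 : ∀ (A : Type u) [RightAct S A], InDInjective S A) :
    LeftReversible S := by
  obtain ⟨z, hz⟩ := exists_left_zero h1
  intro a b
  refine ⟨z, z, ?_⟩
  have ha : IsLeftZero S (a * z) := fun s => by rw [mul_assoc, hz s]
  have hb : IsLeftZero S (b * z) := fun s => by rw [mul_assoc, hz s]
  exact unique_left_zero h1 ha hb

/-- Every act has a zero, provided `S` has a left zero. -/
lemma exists_zero_elem {z : S} (hz : IsLeftZero S z) (A : Type u) [RightAct S A] :
    ∃ θ : A, IsZeroElem S θ := by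
  obtain ⟨a⟩ : Nonempty A := RightAct.nonempty S
  refine ⟨a ⊚ z, fun s => ?_⟩
  rw [act_mul1, hz s]

/-- Any nonempty subact of a cyclic orbit is indecomposable, if `S` is left reversible. -/
lemma orbit_subact_indec (hrev : LeftReversible S) {B : Type u} [RightAct S B] (b : B)
    (E : Set B) (horb : ∀ x ∈ E, ∃ s : S, x = b ⊚ s) : IndecomposableSet S E := by
  rintro ⟨P, Q, hP, hQ, hU, hI⟩
  obtain ⟨p, hp⟩ := hP.1
  obtain ⟨q, hq⟩ := hQ.1
  have hpE : p ∈ E := hU ▸ Set.mem_union_left Q hp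
  have hqE : q ∈ E := hU ▸ Set.mem_union_right P hq
  obtain ⟨upar, hu⟩ := horb p hpE
  obtain ⟨vpar, hv⟩ := horb q hqE
  obtain ⟨w₁, w₂, hw⟩ := hrev upar vpar
  have hkey : p ⊚ w₁ = q ⊚ w₂ := by
    rw [hu, hv, act_mul1, act_mul1, hw]
  have h1 : p ⊚ w₁ ∈ P := hP.2 p hp w₁
  have h2 : p ⊚ w₁ ∈ Q := hkey ▸ hQ.2 q hq w₂
  have : p ⊚ w₁ ∈ P ∩ Q := ⟨h1, h2⟩
  rw [hI] at this
  exact this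

/-- The main step: (i) implies (vi). -/
lemma actInjective_of_inD (h1 : ∀ (A : Type u) [RightAct S A], InDInjective S A)
    (A : Type u) [RightAct S A] : ActInjective S A := by
  classical
  obtain ⟨z, hz⟩ := exists_left_zero h1
  have hrev : LeftReversible S := left_reversible_of_inD h1
  obtain ⟨θ, hθ⟩ := exists_zero_elem hz A
  intro B _ C hC f hf
  -- Zorn's lemma on partial homomorphic extensions, viewed as subsets of B × A
  set 𝒮 : Set (Set (B × A)) :=
    {R | (∀ c ∈ C, (c, f c) ∈ R) ∧ (∀ p ∈ R, ∀ s : S, (p.1 ⊚ s, p.2 ⊚ s) ∈ R) ∧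
      (∀ p ∈ R, ∀ q ∈ R, p.1 = q.1 → p.2 = q.2)} with h𝒮
  have hR₀ : {p : B × A | ∃ c ∈ C, p = (c, f c)} ∈ 𝒮 := by
    refine ⟨fun c hc => ⟨c, hc, rfl⟩, ?_, ?_⟩
    · rintro p ⟨c, hc, rfl⟩ s
      exact ⟨c ⊚ s, hC.2 c hc s, by rw [hf c hc s]⟩
    · rintro p ⟨c, hc, rfl⟩ q ⟨c', hc', rfl⟩ h
      simp only at h ⊢
      rw [h]
  obtain ⟨M, hM₀, hMmem, hMmax⟩ : ∃ M, {p : B × A | ∃ c ∈ C, p = (c, f c)} ⊆ M ∧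
      M ∈ 𝒮 ∧ ∀ R ∈ 𝒮, M ⊆ R → R = M := by
    obtain ⟨M, hsub, hmax⟩ := zorn_subset_nonempty 𝒮 (fun c hc hchain hne => by
      refine ⟨⋃₀ c, ⟨?_, ?_, ?_⟩, fun R hR => Set.subset_sUnion_of_mem hR⟩
      · obtain ⟨R, hR⟩ := hne
        intro x hx
        exact Set.mem_sUnion_of_mem ((hc hR).1 x hx) hR
      · rintro p ⟨R, hR, hpR⟩ s
        exact Set.mem_sUnion_of_mem ((hc hR).2.1 p hpR s) hR
      · rintro p ⟨R, hR, hpR⟩ q ⟨R', hR', hqR⟩ h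
        rcases hchain.total hR hR' with hle | hle
        · exact (hc hR').2.2 p (hle hpR) q hqR h
        · exact (hc hR).2.2 p hpR q (hle hqR) h) _ hR₀
    exact ⟨M, hsub, hmax.prop, fun R hR hMR => hmax.eq_of_ge hR hMR⟩
  obtain ⟨hMC, hMcl, hMfun⟩ := hMmem
  -- the partial function
  set h : B → A := fun x => if hx : ∃ y, (x, y) ∈ M then hx.choose else θ with hdef
  have hval : ∀ {x y}, (x, y) ∈ M → h x = y := by
    intro x y hxy
    have hex : ∃ y, (x, y) ∈ M := ⟨y, hxy⟩
    rw [hdef]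
    simp only [dif_pos hex]
    exact hMfun _ hex.choose_spec _ hxy rfl
  -- the domain is everything
  have hdom : ∀ x : B, ∃ y, (x, y) ∈ M := by
    by_contra hcon
    push_neg at hcon
    obtain ⟨b₀, hb₀⟩ := hcon
    set E : Set B := {x | (∃ y, (x, y) ∈ M) ∧ ∃ s : S, x = b₀ ⊚ s} with hEdef
    by_cases hE : E.Nonempty
    · -- extend M along the orbit of b₀ using InD-injectivity
      have hEsub : IsSubact S E := by
        refine ⟨hE, ?_⟩
        rintro x ⟨⟨y, hy⟩, s', rfl⟩ s
        exact ⟨⟨y ⊚ s, hMcl _ hy s⟩, s' * s, act_mul1 b₀ s' s⟩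
      have hEind : IndecomposableSet S E :=
        orbit_subact_indec hrev b₀ E (fun x hx => hx.2)
      have hhomE : IsActHomOn S h E := by
        rintro x ⟨⟨y, hy⟩, -⟩ s
        rw [hval hy, hval (hMcl _ hy s)]
      obtain ⟨k, hk, hkE⟩ := h1 A B E hEsub hEind h hhomE
      set M' : Set (B × A) := M ∪ {p | ∃ s : S, p = (b₀ ⊚ s, k (b₀ ⊚ s))} with hM'def
      have hM'mem : M' ∈ 𝒮 := by
        refine ⟨fun c hc => Or.inl (hMC c hc), ?_, ?_⟩
        · rintro p (hp | ⟨s', rfl⟩) s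
          · exact Or.inl (hMcl p hp s)
          · refine Or.inr ⟨s' * s, ?_⟩
            simp only [Prod.mk.injEq]
            constructor
            · rw [act_mul1]
            · rw [← hk (b₀ ⊚ s') s, act_mul1]
        · rintro p (hp | ⟨s', rfl⟩) q (hq | ⟨t', rfl⟩) hpq
          · exact hMfun p hp q hq hpq
          · -- p old, q new
            simp only at hpq
            have hpE : p.1 ∈ E := ⟨⟨p.2, by rw [← Prod.mk.eta (p := p)] at hp; exact hp⟩,
              t', hpq⟩
            have : h p.1 = p.2 := hval (by rw [← Prod.mk.eta (p := p)] at hp; exact hp)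
            simp only
            rw [← hpq]
            exact ((hkE hpE).trans this).symm
          · -- p new, q old
            simp only at hpq
            have hqE : q.1 ∈ E := ⟨⟨q.2, by rw [← Prod.mk.eta (p := q)] at hq; exact hq⟩,
              s', hpq.symm⟩
            have : h q.1 = q.2 := hval (by rw [← Prod.mk.eta (p := q)] at hq; exact hq)
            simp only
            rw [hpq]
            exact (hkE hqE).trans this
          · simp only at hpq ⊢
            rw [hpq]
      have hne : M' ≠ M := by
        intro heq
        apply hb₀ (k b₀)
        have : (b₀, k b₀) ∈ M' := Or.inr ⟨1, by rw [act_one1]⟩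
        rwa [heq] at this
      exact hne (hMmax M' hM'mem Set.subset_union_left)
    · -- the orbit of b₀ misses the domain; extend by the constant zero map
      set M' : Set (B × A) := M ∪ {p | ∃ s : S, p = (b₀ ⊚ s, θ)} with hM'def
      have hM'mem : M' ∈ 𝒮 := by
        refine ⟨fun c hc => Or.inl (hMC c hc), ?_, ?_⟩
        · rintro p (hp | ⟨s', rfl⟩) s
          · exact Or.inl (hMcl p hp s)
          · refine Or.inr ⟨s' * s, ?_⟩
            simp only [Prod.mk.injEq]
            exact ⟨by rw [act_mul1], hθ s⟩
        · rintro p (hp | ⟨s', rfl⟩) q (hq | ⟨t', rfl⟩) hpq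
          · exact hMfun p hp q hq hpq
          · exfalso
            simp only at hpq
            exact hE ⟨p.1, ⟨p.2, by rw [← Prod.mk.eta (p := p)] at hp; exact hp⟩, t', hpq⟩
          · exfalso
            simp only at hpq
            exact hE ⟨q.1, ⟨q.2, by rw [← Prod.mk.eta (p := q)] at hq; exact hq⟩, s', hpq.symm⟩
          · rfl
      have hne : M' ≠ M := by
        intro heq
        apply hb₀ θ
        have : (b₀, θ) ∈ M' := Or.inr ⟨1, by rw [act_one1]⟩
        rwa [heq] at this
      exact hne (hMmax M' hM'mem Set.subset_union_left)
  refine ⟨h, ?_, ?_⟩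
  · intro x s
    obtain ⟨y, hy⟩ := hdom x
    rw [hval hy, hval (hMcl _ hy s)]
  · intro c hc
    exact hval (hMC c hc)

end AbsInjAux5
set_option linter.unusedSectionVars false
namespace AbsInjAux6
open AbsInjAux AbsInjAux2

local infixl:70 " ⊚ " => RightAct.act

variable {S : Type u} [Monoid S]

section Pushout
variable {A B : Type u} [RightAct S A] [RightAct S B]

open Classical in
/-- Normal form for the pushout of `B ⊇ C --f--> A`. -/
noncomputable def nuP (C : Set B) (f : B → A) (x : B ⊕ A) : B ⊕ A :=
  match x with
  | .inl b => if b ∈ C then .inr (f b) else .inl b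
  | .inr a => .inr a

variable {C : Set B} {f : B → A}

lemma nuP_inr (a : A) : nuP C f (Sum.inr a) = Sum.inr a := rfl

lemma nuP_inl_mem {b : B} (hb : b ∈ C) : nuP C f (Sum.inl b) = Sum.inr (f b) := by
  simp [nuP, hb]

lemma nuP_inl_not {b : B} (hb : b ∉ C) : nuP C f (Sum.inl b) = Sum.inl b := by
  simp [nuP, hb]

lemma nuP_idem (x : B ⊕ A) : nuP C f (nuP C f x) = nuP C f x := by
  rcases x with b | a
  · by_cases hb : b ∈ C
    · rw [nuP_inl_mem hb, nuP_inr]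
    · rw [nuP_inl_not hb, nuP_inl_not hb]
  · rw [nuP_inr, nuP_inr]

lemma nuP_act (hC : IsSubact S C) (hf : IsActHomOn S f C) (x : B ⊕ A) (s : S) :
    nuP C f (nuP C f x ⊚ s) = nuP C f (x ⊚ s) := by
  rcases x with b | a
  · by_cases hb : b ∈ C
    · rw [nuP_inl_mem hb, sum_act_inr, sum_act_inl, nuP_inr,
        nuP_inl_mem (hC.2 b hb s), hf b hb s]
    · rw [nuP_inl_not hb]
  · rw [nuP_inr]

/-- The pushout act. -/
abbrev NFP (C : Set B) (f : B → A) : Type u := {x : B ⊕ A // nuP C f x = x}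

noncomputable def nfpAct (hC : IsSubact S C) (hf : IsActHomOn S f C) :
    RightAct S (NFP C f) where
  act x s := ⟨nuP C f (x.1 ⊚ s), nuP_idem _⟩
  act_one x := Subtype.ext (by
    show nuP C f (x.1 ⊚ 1) = x.1
    rw [act_one1, x.2])
  act_mul x s t := Subtype.ext (by
    show nuP C f (nuP C f (x.1 ⊚ s) ⊚ t) = nuP C f (x.1 ⊚ (s * t))
    rw [nuP_act hC hf, act_mul1])
  nonempty := ⟨⟨Sum.inr (Classical.choice (RightAct.nonempty S)), rfl⟩⟩

/-- (iv) implies (ii). -/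
lemma inD_of_pInD (h4 : ∀ (Q : Type u) [RightAct S Q], Indecomposable S Q → PInDInjective S Q)
    (hA : Indecomposable S A) (hC : IsSubact S C) (hCind : IndecomposableSet S C)
    (hf : IsActHomOn S f C) :
    ∃ g : B → A, IsActHom S g ∧ Set.EqOn g f C := by
  classical
  letI iP : RightAct S (NFP C f) := nfpAct hC hf
  set iA : A → NFP C f := fun a => ⟨Sum.inr a, rfl⟩ with hiA
  have hiAhom : ∀ (a : A) (s : S), iA a ⊚ s = iA (a ⊚ s) := by
    intro a s
    apply Subtype.ext
    show nuP C f (Sum.inr a ⊚ s) = Sum.inr (a ⊚ s)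
    rw [sum_act_inr, nuP_inr]
  set Abar : Set (NFP C f) := Set.range iA with hAbar
  have hAbarsub : IsSubact S Abar := by
    refine ⟨⟨iA (Classical.choice (RightAct.nonempty S)), Set.mem_range_self _⟩, ?_⟩
    rintro x ⟨a, rfl⟩ s
    rw [hiAhom]
    exact Set.mem_range_self _
  have hAbarind : IndecomposableSet S Abar := by
    rintro ⟨P, Q, hP, hQ, hU, hI⟩
    apply hA
    refine ⟨iA ⁻¹' P, iA ⁻¹' Q, ⟨?_, ?_⟩, ⟨?_, ?_⟩, ?_, ?_⟩
    · obtain ⟨p, hp⟩ := hP.1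
      have : p ∈ Abar := hU ▸ Set.mem_union_left Q hp
      obtain ⟨a, rfl⟩ := this
      exact ⟨a, hp⟩
    · intro a ha s
      show iA (a ⊚ s) ∈ P
      rw [← hiAhom]
      exact hP.2 _ ha s
    · obtain ⟨q, hq⟩ := hQ.1
      have : q ∈ Abar := hU ▸ Set.mem_union_right P hq
      obtain ⟨a, rfl⟩ := this
      exact ⟨a, hq⟩
    · intro a ha s
      show iA (a ⊚ s) ∈ Q
      rw [← hiAhom]
      exact hQ.2 _ ha s
    · apply Set.eq_univ_of_forall
      intro a
      have : iA a ∈ P ∪ Q := hU ▸ Set.mem_range_self _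
      exact this
    · ext a
      simp only [Set.mem_inter_iff, Set.mem_preimage, Set.mem_empty_iff_false, iff_false]
      rintro ⟨h1, h2⟩
      have : iA a ∈ P ∩ Q := ⟨h1, h2⟩
      rw [hI] at this
      exact this
  set a₀ : A := Classical.choice (RightAct.nonempty S) with ha₀
  set F : NFP C f → A := fun x => match x.1 with
    | .inl _ => a₀
    | .inr a => a
    with hF
  have hFiA : ∀ a : A, F (iA a) = a := fun a => rfl
  have hFhom : IsActHomOn S F Abar := by
    rintro x ⟨a, rfl⟩ s
    rw [hiAhom]
  have hFinj : Set.InjOn F Abar := by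
    rintro x ⟨a, rfl⟩ y ⟨a', rfl⟩ hxy
    rw [hFiA, hFiA] at hxy
    rw [hxy]
  obtain ⟨r, hr, hrA⟩ := h4 A hA (NFP C f) Abar hAbarsub hAbarind F hFhom hFinj
  set iB : B → NFP C f := fun b => ⟨nuP C f (Sum.inl b), nuP_idem _⟩ with hiB
  have hiBhom : ∀ (b : B) (s : S), iB b ⊚ s = iB (b ⊚ s) := by
    intro b s
    apply Subtype.ext
    show nuP C f (nuP C f (Sum.inl b) ⊚ s) = nuP C f (Sum.inl (b ⊚ s))
    rw [nuP_act hC hf, sum_act_inl]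
  refine ⟨fun b => r (iB b), ?_, ?_⟩
  · intro b s
    show r (iB (b ⊚ s)) = r (iB b) ⊚ s
    rw [← hiBhom, hr]
  · intro c hc
    have hiBc : iB c = iA (f c) := by
      apply Subtype.ext
      show nuP C f (Sum.inl c) = Sum.inr (f c)
      rw [nuP_inl_mem hc]
    show r (iB c) = f c
    rw [hiBc, hrA (Set.mem_range_self _), hFiA]

end Pushout

end AbsInjAux6
namespace AbsInjAux7
open AbsInjAux AbsInjAux2

local infixl:70 " ⊚ " => RightAct.act

variable {S : Type u} [Monoid S]

/-- An indecomposable subact yields an indecomposable act on the subtype. -/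
lemma indec_subtype {A : Type u} [RightAct S A] {K : Set A} (hK : IsSubact S K)
    (hind : IndecomposableSet S K) : @Indecomposable S _ K (subAct hK) := by
  letI := subAct hK
  rintro ⟨P, Q, hP, hQ, hU, hI⟩
  apply hind
  have hvalact : ∀ (p : K) (s : S), ((p ⊚ s : K) : A) = (p : A) ⊚ s := fun _ _ => rfl
  refine ⟨Subtype.val '' P, Subtype.val '' Q, ⟨?_, ?_⟩, ⟨?_, ?_⟩, ?_, ?_⟩
  · obtain ⟨p, hp⟩ := hP.1
    exact ⟨p.1, p, hp, rfl⟩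
  · rintro x ⟨p, hp, rfl⟩ s
    exact ⟨p ⊚ s, hP.2 p hp s, (hvalact p s)⟩
  · obtain ⟨q, hq⟩ := hQ.1
    exact ⟨q.1, q, hq, rfl⟩
  · rintro x ⟨q, hq, rfl⟩ s
    exact ⟨q ⊚ s, hQ.2 q hq s, (hvalact q s)⟩
  · apply Set.Subset.antisymm
    · rintro x (⟨p, -, rfl⟩ | ⟨q, -, rfl⟩)
      · exact p.2
      · exact q.2
    · intro k hk
      have : (⟨k, hk⟩ : K) ∈ P ∪ Q := by
        rw [hU]; exact Set.mem_univ _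
      rcases this with h | h
      · exact Or.inl ⟨⟨k, hk⟩, h, rfl⟩
      · exact Or.inr ⟨⟨k, hk⟩, h, rfl⟩
  · ext x
    simp only [Set.mem_inter_iff, Set.mem_empty_iff_false, iff_false]
    rintro ⟨⟨p, hp, rfl⟩, ⟨q, hq, hqx⟩⟩
    have : q = p := Subtype.ext hqx
    subst this
    have : q ∈ P ∩ Q := ⟨hp, hq⟩
    rw [hI] at this
    exact this

/-- (ii) implies (i): restrict the codomain to the component of the image. -/
lemma inD_all_of_indec
    (h2 : ∀ (Q : Type u) [RightAct S Q], Indecomposable S Q → InDInjective S Q)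
    (A : Type u) [RightAct S A] : InDInjective S A := by
  classical
  intro B _ C hC hCind f hf
  obtain ⟨x₀, hx₀⟩ := hC.1
  set K : Set A := ActComponent S (f x₀) with hK
  have hKsub : IsSubact S K := component_subact (f x₀)
  have hKind : IndecomposableSet S K := component_indec (f x₀)
  letI iK : RightAct S K := subAct hKsub
  have hfK : ∀ c ∈ C, f c ∈ K := fun c hc =>
    hom_respects_conn hf (indec_connected hC hCind hx₀ hc)
  set f' : B → K := fun b => if hb : f b ∈ K then ⟨f b, hb⟩ else ⟨f x₀, Relation.EqvGen.refl _⟩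
    with hf'def
  have hf'val : ∀ {b : B} (hb : f b ∈ K), f' b = ⟨f b, hb⟩ := by
    intro b hb
    rw [hf'def]
    exact dif_pos hb
  have hf'hom : IsActHomOn S f' C := by
    intro c hc s
    have h1 : f (c ⊚ s) ∈ K := hfK _ (hC.2 c hc s)
    have h2 : f c ∈ K := hfK c hc
    rw [hf'val h1, hf'val h2]
    apply Subtype.ext
    show f (c ⊚ s) = f c ⊚ s
    exact hf c hc s
  obtain ⟨g', hg', hEq⟩ := h2 K (indec_subtype hKsub hKind) B C hC hCind f' hf'hom
  refine ⟨fun b => (g' b).1, ?_, ?_⟩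
  · intro b s
    show (g' (b ⊚ s)).1 = (g' b).1 ⊚ s
    rw [hg' b s]
    rfl
  · intro c hc
    show (g' c).1 = f c
    rw [hEq hc, hf'val (hfK c hc)]

end AbsInjAux7
/-- TFAE: (i) all acts are InD-injective; (ii) all indecomposable acts are
InD-injective; (iii) all acts are PInD-injective; (iv) all indecomposable acts are
PInD-injective; (v) all indecomposable acts are injective; (vi) `S` is right absolutely
injective (all acts are injective). -/
theorem absolutely_injective_tfae (S : Type u) [Monoid S] :
    List.TFAE [
      ∀ (A : Type u) [RightAct S A], InDInjective S A,
      ∀ (A : Type u) [RightAct S A], Indecomposable S A → InDInjective S A,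
      ∀ (A : Type u) [RightAct S A], PInDInjective S A,
      ∀ (A : Type u) [RightAct S A], Indecomposable S A → PInDInjective S A,
      ∀ (A : Type u) [RightAct S A], Indecomposable S A → ActInjective S A,
      ∀ (A : Type u) [RightAct S A], ActInjective S A ] := by
  tfae_have 6 → 1 := by
    intro h A _ B _ C hC hind f hf
    exact h A B C hC f hf
  tfae_have 1 → 2 := by
    intro h A _ _
    exact h A
  tfae_have 2 → 1 := by
    intro h A _
    exact AbsInjAux7.inD_all_of_indec h A
  tfae_have 1 → 3 := by
    intro h A _ B _ C hC hind f hf _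
    exact h A B C hC hind f hf
  tfae_have 3 → 4 := by
    intro h A _ _
    exact h A
  tfae_have 4 → 2 := by
    intro h A _ hA B _ C hC hind f hf
    exact AbsInjAux6.inD_of_pInD h hA hC hind hf
  tfae_have 1 → 6 := by
    intro h A _
    exact AbsInjAux5.actInjective_of_inD h A
  tfae_have 6 → 5 := by
    intro h A _ _
    exact h A
  tfae_have 5 → 4 := by
    intro h A _ hA B _ C hC hind f hf _
    exact h A hA B C hC f hf
  tfae_finish
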